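/- If f : ℝ → ℝ is continuous and there exists a function F : ℝ → ℝ such that for every compactly supported probability measure μ on ℝ, ∫ f dμ = F(∫ y dμ(y)), then f is affine, i.e., there exist a, b ∈ ℝ with f(x) = a*x + b for all x. -/

import Mathlib

open MeasureTheory
open scoped ENNReal

theorem stmt0 (f : ℝ → ℝ) (hf : Continuous f) (F : ℝ → ℝ)
    (h : ∀ μ : Measure ℝ, IsProbabilityMeasure μ →
      (∃ K : Set ℝ, IsCompact K ∧ μ Kᶜ = 0) →
      ∫ x, f x ∂μ = F (∫ y, y ∂μ)) :
    ∃ a b : ℝ, ∀ x, f x = a * x + b := by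
  have hdirac : ∀ x : ℝ, F x = f x := by
    intro x
    have := h (Measure.dirac x) (by infer_instance)
      ⟨{x}, isCompact_singleton, by simp⟩
    simp [integral_dirac] at this
    simpa using this.symm
  have hmid : ∀ x y : ℝ, f (midpoint ℝ x y) = midpoint ℝ (f x) (f y) := by
    intro x y
    set μ : Measure ℝ := (1/2 : ℝ≥0∞) • Measure.dirac x + (1/2 : ℝ≥0∞) • Measure.dirac y with hμ
    have hprob : IsProbabilityMeasure μ := by
      constructor
      simp only [hμ, Measure.add_apply, Measure.smul_apply, measure_univ, smul_eq_mul, mul_one]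
      rw [ENNReal.div_add_div_same]
      rw [one_add_one_eq_two, ENNReal.div_self two_ne_zero ENNReal.ofNat_ne_top]
    have hintb : ∀ (g : ℝ → ℝ) (p : ℝ), Integrable g (Measure.dirac p) := fun g p =>
      (integrable_const (g p)).congr (ae_eq_dirac g).symm
    have hint : ∀ g : ℝ → ℝ, ∫ z, g z ∂μ = (g x + g y) / 2 := by
      intro g
      rw [hμ, integral_add_measure, integral_smul_measure, integral_smul_measure,
        integral_dirac, integral_dirac]
      · norm_num
        ring
      · exact (hintb g x).smul_measure (by norm_num)
      · exact (hintb g y).smul_measure (by norm_num)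
    have hKc : μ ({x, y} : Set ℝ)ᶜ = 0 := by
      simp only [hμ, Measure.add_apply, Measure.smul_apply]
      rw [Measure.dirac_apply' _ ((measurableSet_insert.2 (measurableSet_singleton y)).compl),
        Measure.dirac_apply' _ ((measurableSet_insert.2 (measurableSet_singleton y)).compl)]
      simp
    have := h μ hprob ⟨{x, y}, (Set.finite_singleton y).insert x |>.isCompact, hKc⟩
    have hid : ∫ z, id z ∂μ = (x + y) / 2 := hint id
    simp only [id] at hid
    rw [hint f, show (∫ z, z ∂μ) = (x+y)/2 from hid, hdirac] at this
    simp only [midpoint_eq_smul_add, smul_eq_mul, invOf_eq_inv]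
    rw [show (2:ℝ)⁻¹ * (x + y) = (x + y)/2 by ring, ← this]
    ring
  refine ⟨f 1 - f 0, f 0, fun x => ?_⟩
  have hmid' : ∀ a b : ℝ, (fun z => f z - f 0) (midpoint ℝ a b)
      = midpoint ℝ ((fun z => f z - f 0) a) ((fun z => f z - f 0) b) := by
    intro a b
    simp only
    rw [hmid]
    simp [midpoint_eq_smul_add, smul_eq_mul]
    ring
  have hcont : Continuous fun z => f z - f 0 := by fun_prop
  have hL := ((AddMonoidHom.ofMapMidpoint ℝ ℝ (fun z => f z - f 0) (by simp)
      hmid').toRealLinearMap hcont).map_smul x 1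
  simp only [AddMonoidHom.coe_toRealLinearMap, AddMonoidHom.coe_ofMapMidpoint,
    smul_eq_mul, mul_one] at hL
  change f x - f 0 = x * (f 1 - f 0) at hL
  linarith [hL]
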